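/- If A is G-pseudo-injective and there exists a permutation π of {1,…,n} such that λ_i^{-1}(O) = μ_{π(i)}^{-1}(O) for every i ∈ {1,…,n} and every orbit O ∈ A/G, then f extends to a G-monomial map of A^n. -/

import Mathlib

variable {R A : Type*} [Ring R] [AddCommGroup A] [Module R A]

/-- The orbit of `a₀ ∈ A` under a subgroup `G ≤ Aut_R(A)`; the orbits in `A/G` are
exactly the sets `orbitG G a₀` for `a₀ : A`. -/
def orbitG (G : Subgroup (A ≃ₗ[R] A)) (a₀ : A) : Set A :=
  {b | ∃ g ∈ G, (g : A ≃ₗ[R] A) a₀ = b}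

/-- The symmetrized weight composition built on `G`: `swcG G a a₀` is the number of
coordinates of `a ∈ A^n` lying in the orbit of `a₀`. -/
noncomputable def swcG (G : Subgroup (A ≃ₗ[R] A)) {n : ℕ} (a : Fin n → A) (a₀ : A) : ℚ :=
  Nat.card {i : Fin n // a i ∈ orbitG G a₀}

/-- Membership in the closure `Ḡ` of `G`: `g` maps every `G`-orbit onto itself. -/
def inClosure (G : Subgroup (A ≃ₗ[R] A)) (g : A ≃ₗ[R] A) : Prop :=
  ∀ a₀ : A, (g : A ≃ₗ[R] A) '' orbitG G a₀ = orbitG G a₀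

/-- A map `h : A^n → A^n` is `G`-monomial if there are a permutation `π` and
automorphisms `g₁, …, g_n` in the closure `Ḡ` with `h(a)_i = g_i (a_{π i})`. -/
def IsGMonomial (G : Subgroup (A ≃ₗ[R] A)) {n : ℕ} (h : (Fin n → A) → (Fin n → A)) : Prop :=
  ∃ (π : Equiv.Perm (Fin n)) (g : Fin n → (A ≃ₗ[R] A)),
    (∀ i, inClosure G (g i)) ∧ ∀ (a : Fin n → A) (i : Fin n), h a i = (g i) (a (π i))

/-- `A` is `G`-pseudo-injective: every injective `R`-linear map `B → A` from a submodule
`B ⊆ A` satisfying `f(O ∩ B) ⊆ O` for every orbit `O ∈ A/G` extends to an element of `Ḡ`. -/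
def GPseudoInjective (R : Type*) (A : Type*) [Ring R] [AddCommGroup A] [Module R A]
    (G : Subgroup (A ≃ₗ[R] A)) : Prop :=
  ∀ (B : Submodule R A) (f : B →ₗ[R] A), Function.Injective f →
    (∀ (a₀ : A) (b : B), (b : A) ∈ orbitG G a₀ → f b ∈ orbitG G a₀) →
    ∃ g : A ≃ₗ[R] A, inClosure G g ∧ ∀ b : B, g (b : A) = f b

/-- If `A` is `G`-pseudo-injective and there is a permutation `π` with
`λᵢ⁻¹(O) = μ_{π(i)}⁻¹(O)` for all `i` and all orbits `O ∈ A/G`, then `f`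
extends to a `G`-monomial map of `A^n`. -/
theorem extends_GMonomial_of_preimage_eq [Finite R] [Finite A]
    {W : Type*} [AddCommGroup W] [Module R W] [Finite W]
    (G : Subgroup (A ≃ₗ[R] A)) {n : ℕ} (hn : 0 < n)
    (C : Submodule R (Fin n → A)) (lam : W →ₗ[R] (Fin n → A))
    (hmem : ∀ w : W, lam w ∈ C) (hsurj : ∀ c ∈ C, ∃ w : W, lam w = c)
    (f : C →ₗ[R] (Fin n → A))
    (hpi : GPseudoInjective R A G)
    (hperm : ∃ π : Equiv.Perm (Fin n), ∀ (i : Fin n) (a₀ : A),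
      {w : W | lam w i ∈ orbitG G a₀} =
        {w : W | (f ⟨lam w, hmem w⟩ : Fin n → A) (π i) ∈ orbitG G a₀}) :
    ∃ h : (Fin n → A) → (Fin n → A),
      IsGMonomial G h ∧ ∀ c : C, h (c : Fin n → A) = f c := by

  obtain ⟨π, hperm⟩ := hperm
  have horb0 : orbitG G (0 : A) = {0} := by
    ext b
    constructor
    · rintro ⟨g, _, rfl⟩; simp
    · rintro rfl; exact ⟨1, one_mem G, by simp⟩
  set L : W →ₗ[R] C := lam.codRestrict C hmem with hL
  have key : ∀ i : Fin n, ∃ g : A ≃ₗ[R] A, inClosure G g ∧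
      ∀ w : W, g (lam w i) = f (L w) (π i) := by
    intro i
    set li : W →ₗ[R] A := (LinearMap.proj i).comp lam with hli
    set mi : W →ₗ[R] A := (LinearMap.proj (π i)).comp (f.comp L) with hmi
    have hli_app : ∀ w, li w = lam w i := fun w => rfl
    have hmi_app : ∀ w, mi w = f ⟨lam w, hmem w⟩ (π i) := fun w => rfl
    have hk : LinearMap.ker li = LinearMap.ker mi := by
      ext w
      have := Set.ext_iff.mp (hperm i 0) w
      simp only [horb0, Set.mem_setOf_eq, Set.mem_singleton_iff] at this
      simpa [LinearMap.mem_ker, hli_app, hmi_app] using this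
    set φ : LinearMap.range li →ₗ[R] A :=
      ((LinearMap.ker li).liftQ mi hk.le).comp li.quotKerEquivRange.symm.toLinearMap with hφ
    have hφ_app : ∀ w : W, φ ⟨li w, LinearMap.mem_range_self li w⟩ = mi w := by
      intro w
      have h1 : li.quotKerEquivRange.symm ⟨li w, LinearMap.mem_range_self li w⟩ =
          Submodule.Quotient.mk w := by
        rw [LinearEquiv.symm_apply_eq]
        exact Subtype.ext (LinearMap.quotKerEquivRange_apply_mk li w).symm
      simp [hφ, h1]
    have hφinj : Function.Injective φ := by
      have h1 : LinearMap.ker ((LinearMap.ker li).liftQ mi hk.le) = ⊥ :=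
        Submodule.ker_liftQ_eq_bot _ _ _ hk.ge
      exact (LinearMap.ker_eq_bot.mp h1).comp li.quotKerEquivRange.symm.injective
    have hφorb : ∀ (a₀ : A) (b : LinearMap.range li), (b : A) ∈ orbitG G a₀ →
        φ b ∈ orbitG G a₀ := by
      rintro a₀ ⟨b, w, rfl⟩ hb
      have := Set.ext_iff.mp (hperm i a₀) w
      simp only [Set.mem_setOf_eq] at this
      have hmw : mi w ∈ orbitG G a₀ := by
        rw [hmi_app]; exact this.mp (by simpa [hli_app] using hb)
      simpa [hφ_app w] using hmw
    obtain ⟨g, hgclo, hgext⟩ := hpi (LinearMap.range li) φ hφinj hφorb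
    refine ⟨g, hgclo, fun w => ?_⟩
    have := hgext ⟨li w, LinearMap.mem_range_self li w⟩
    rw [hφ_app w] at this
    exact this
  choose g hgclo hgext using key
  refine ⟨fun a j => g (π.symm j) (a (π.symm j)), ⟨π.symm, fun j => g (π.symm j),
    fun j => hgclo _, fun a j => rfl⟩, ?_⟩
  rintro ⟨c, hc⟩
  obtain ⟨w, hw⟩ := hsurj c hc
  funext j
  have h1 := hgext (π.symm j) w
  have hLw : L w = ⟨c, hc⟩ := Subtype.ext hw
  simp only [hw, Equiv.apply_symm_apply, hLw] at h1
  exact h1
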